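/- arXiv:1701.08853 — 3 statements merged into one kernel-verified Lean document; each statement's English description precedes it below -/
import Mathlib

section
/- Let F be a free group and let x, y ∈ F be nontrivial elements. If x^m = y^n for some integers m, n ≥ 2 (in fact for any m, n ≥ 1), then x and y commute. -/
set_option linter.unusedSectionVars false
set_option linter.unusedVariables false

namespace LSaux

variable {α : Type*} [DecidableEq α]

open FreeGroup

/-- Non-cancelling adjacency relation on letters. -/
def R (x y : α × Bool) : Prop := ¬(x.1 = y.1 ∧ x.2 = !y.2)

lemma reduce_eq_self_of_chain' {L : List (α × Bool)} (h : List.Chain' (R (α := α)) L) :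
    FreeGroup.reduce L = L := by
  induction L with
  | nil => rfl
  | cons x t ih =>
    have ht : FreeGroup.reduce t = t := ih h.tail
    rw [FreeGroup.reduce.cons, ht]
    cases t with
    | nil => rfl
    | cons y s =>
      have hxy : R x y := (List.isChain_cons_cons.1 h).1
      simp only [R] at hxy
      simp only [if_neg hxy]

lemma chain'_of_reduce_eq_self {L : List (α × Bool)} (h : FreeGroup.reduce L = L) :
    List.Chain' (R (α := α)) L := by
  induction L with
  | nil => exact List.isChain_nil
  | cons x t ih =>
    have hlen : (FreeGroup.reduce t).length ≤ t.length :=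
      FreeGroup.Red.length_le FreeGroup.reduce.red
    rw [FreeGroup.reduce.cons] at h
    cases hrt : FreeGroup.reduce t with
    | nil =>
      rw [hrt] at h
      simp only [List.cons.injEq] at h
      rw [← h.2]
      exact List.isChain_singleton x
    | cons y s =>
      rw [hrt] at h
      by_cases hc : x.1 = y.1 ∧ x.2 = !y.2
      · exfalso
        simp only [if_pos hc] at h
        have h1 : s.length = (x :: t).length := congrArg List.length h
        have h2 : (y :: s).length ≤ t.length := by rw [← hrt]; exact hlen
        simp only [List.length_cons] at h1 h2; omega
      · simp only [if_neg hc] at h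
        have h2 : t = y :: s := by
          have := h.symm
          injection this with _ h3
        rw [h2]
        refine List.isChain_cons_cons.2 ⟨hc, ?_⟩
        rw [← h2]
        exact ih (by rw [hrt, h2])

lemma chain'_toWord (a : FreeGroup α) : List.Chain' (R (α := α)) a.toWord :=
  chain'_of_reduce_eq_self (FreeGroup.reduce_toWord a)

lemma invRev_append (A B : List (α × Bool)) :
    invRev (A ++ B) = invRev B ++ invRev A := by
  simp [invRev]

lemma invRev_cons (x : α × Bool) (A : List (α × Bool)) :
    invRev (x :: A) = invRev A ++ [(x.1, !x.2)] := by
  simp [invRev]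

lemma head?_invRev (L : List (α × Bool)) :
    (invRev L).head? = L.getLast?.map (fun x => (x.1, !x.2)) := by
  simp [invRev, List.head?_reverse, List.getLast?_map]

lemma getLast?_invRev (L : List (α × Bool)) :
    (invRev L).getLast? = L.head?.map (fun x => (x.1, !x.2)) := by
  simp [invRev, List.getLast?_reverse, List.head?_map]

/-- `n`-fold repetition of a word. -/
def lp : ℕ → List (α × Bool) → List (α × Bool)
  | 0, _ => []
  | n + 1, L => L ++ lp n L

lemma mk_lp (n : ℕ) (L : List (α × Bool)) : FreeGroup.mk (lp n L) = (FreeGroup.mk L) ^ n := by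
  induction n with
  | zero => simp [lp]; rfl
  | succ n ih => rw [lp, ← FreeGroup.mul_mk, ih, pow_succ']

lemma lp_length (n : ℕ) (L : List (α × Bool)) : (lp n L).length = n * L.length := by
  induction n with
  | zero => simp [lp]
  | succ n ih => rw [lp, List.length_append, ih]; ring

lemma head?_lp {n : ℕ} (hn : 1 ≤ n) {L : List (α × Bool)} (hL : L ≠ []) :
    (lp n L).head? = L.head? := by
  obtain ⟨m, rfl⟩ : ∃ m, n = m + 1 := ⟨n - 1, by omega⟩
  obtain ⟨x, t, rfl⟩ := List.exists_cons_of_ne_nil hL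
  simp [lp]

lemma getLast?_lp {n : ℕ} (hn : 1 ≤ n) {L : List (α × Bool)} (hL : L ≠ []) :
    (lp n L).getLast? = L.getLast? := by
  induction n with
  | zero => omega
  | succ m ih =>
    rw [lp]
    cases m with
    | zero => simp [lp]
    | succ k =>
      have hne : lp (k + 1) L ≠ [] := by
        intro hnil
        apply hL
        have hl := lp_length (k + 1) L
        rw [hnil] at hl
        simp only [List.length_nil] at hl
        have hL0 : L.length = 0 := by
          rcases Nat.mul_eq_zero.1 hl.symm with h | h
          · omega
          · exact h
        exact List.length_eq_zero_iff.1 hL0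
      rw [List.getLast?_append_of_ne_nil _ hne]
      exact ih (by omega)

lemma head?_lp_some {n : ℕ} {L : List (α × Bool)} {y : α × Bool}
    (h : (lp n L).head? = some y) : L.head? = some y := by
  cases n with
  | zero => simp [lp] at h
  | succ m =>
    cases L with
    | nil =>
      have : lp (m+1) ([] : List (α × Bool)) = [] := by
        have := lp_length (m+1) ([] : List (α × Bool))
        simpa using List.length_eq_zero_iff.1 (by simpa using this)
      rw [this] at h; simp at h
    | cons x t => rw [← h, head?_lp (by omega) (by simp)]

lemma chain'_lp {L : List (α × Bool)} (hL : List.Chain' (R (α := α)) L)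
    (hcr : ∀ x ∈ L.getLast?, ∀ y ∈ L.head?, R x y) (n : ℕ) :
    List.Chain' (R (α := α)) (lp n L) := by
  induction n with
  | zero => exact List.isChain_nil
  | succ m ih =>
    rw [lp]
    refine List.IsChain.append hL ih ?_
    intro x hx y hy
    exact hcr x hx y (head?_lp_some hy)

lemma decomp : ∀ (N : ℕ) (L : List (α × Bool)), L.length ≤ N →
    List.Chain' (R (α := α)) L →
    ∃ U C, L = U ++ C ++ invRev U ∧ List.Chain' (R (α := α)) C ∧
      (∀ x ∈ C.getLast?, ∀ y ∈ C.head?, R x y) := by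
  intro N
  induction N with
  | zero =>
    intro L hL _
    rw [List.length_eq_zero_iff.1 (Nat.le_zero.1 hL)]
    exact ⟨[], [], by simp [invRev], List.isChain_nil, by simp⟩
  | succ N ih =>
    intro L hL hC
    by_cases hcr : ∀ x ∈ L.getLast?, ∀ y ∈ L.head?, R x y
    · exact ⟨[], L, by simp [invRev], hC, hcr⟩
    · push_neg at hcr
      obtain ⟨x, hx, y, hy, hR⟩ := hcr
      rw [R, not_not] at hR
      cases L with
      | nil => simp at hy
      | cons y' T =>
        have hyy : y' = y := by simpa using hy
        subst hyy
        by_cases hTne : T = []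
        · subst hTne
          have hxy : y' = x := by simpa using hx
          rw [← hxy] at hR
          simp at hR
        · set g := T.getLast hTne with hg
          set M := T.dropLast with hM
          have hTd : T = M ++ [g] := (List.dropLast_append_getLast hTne).symm
          have hgl : (y' :: T).getLast? = some g := by
            rw [hTd, ← List.cons_append, List.getLast?_concat]
          have hxg : x = g := by
            rw [hgl] at hx
            exact (Option.some_inj.1 hx).symm
          have hLM : y' :: T = [y'] ++ M ++ [x] := by
            rw [List.append_assoc, hxg, ← hTd]
            rfl
          have hMC : List.Chain' (R (α := α)) M := hC.infix ⟨[y'], [x], hLM.symm⟩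
          have hMlen : M.length ≤ N := by
            have h2 := congrArg List.length hLM
            simp only [List.length_cons, List.length_append, List.length_singleton] at h2 hL
            omega
          obtain ⟨U', C, hMeq, hCc, hCcr⟩ := ih M hMlen hMC
          refine ⟨y' :: U', C, ?_, hCc, hCcr⟩
          have hxval : x = (y'.1, !y'.2) := by
            rcases hR with ⟨h1, h2⟩
            exact Prod.ext h1 h2
          rw [hLM, hMeq, invRev_cons, hxval]
          simp [List.append_assoc]

/-- If `U ++ invRev U` is reduced then `U` is empty. -/
lemma eq_nil_of_chain'_self_invRev {U : List (α × Bool)}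
    (h : List.Chain' (R (α := α)) (U ++ invRev U)) : U = [] := by
  by_contra hU
  have h3 := (List.isChain_append.1 h).2.2
  have hlast : U.getLast? = some (U.getLast hU) := List.getLast?_eq_getLast hU
  have hhead : (invRev U).head? = some ((U.getLast hU).1, !(U.getLast hU).2) := by
    rw [head?_invRev, hlast]; rfl
  have := h3 _ hlast _ hhead
  exact this ⟨rfl, by simp⟩

lemma head?_append_left {β : Type*} {L M : List β} (h : L ≠ []) :
    (L ++ M).head? = L.head? := by
  obtain ⟨a, t, rfl⟩ := List.exists_cons_of_ne_nil h
  rfl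

lemma lp_ne_nil {n : ℕ} (hn : 1 ≤ n) {L : List (α × Bool)} (hL : L ≠ []) :
    lp n L ≠ [] := by
  intro hnil
  apply hL
  have hl := lp_length n L
  rw [hnil] at hl
  simp only [List.length_nil] at hl
  rcases Nat.mul_eq_zero.1 hl.symm with h | h
  · omega
  · exact List.length_eq_zero_iff.1 h

lemma pow_word {U C : List (α × Bool)}
    (h : List.Chain' (R (α := α)) (U ++ C ++ invRev U))
    (hcr : ∀ x ∈ C.getLast?, ∀ y ∈ C.head?, R x y) (n : ℕ) (hn : 1 ≤ n) :
    (FreeGroup.mk (U ++ C ++ invRev U)) ^ n = FreeGroup.mk (U ++ lp n C ++ invRev U)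
      ∧ List.Chain' (R (α := α)) (U ++ lp n C ++ invRev U) := by
  constructor
  · have e1 : FreeGroup.mk (U ++ C ++ invRev U)
        = FreeGroup.mk U * FreeGroup.mk C * (FreeGroup.mk U)⁻¹ := by
      rw [FreeGroup.inv_mk, FreeGroup.mul_mk, FreeGroup.mul_mk]
    rw [e1, conj_pow, ← mk_lp, FreeGroup.mul_mk, FreeGroup.inv_mk, FreeGroup.mul_mk]
  · by_cases hCnil : C = []
    · subst hCnil
      have hU : U = [] := eq_nil_of_chain'_self_invRev (by simpa using h)
      subst hU
      have : lp n ([] : List (α × Bool)) = [] :=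
        List.length_eq_zero_iff.1 (by simp [lp_length])
      simp [this]; exact List.isChain_nil
    · -- C nonempty case
      rw [List.append_assoc] at h ⊢
      obtain ⟨hU, hrest⟩ := List.isChain_append.1 h
      obtain ⟨hrest1, hjunc⟩ := hrest
      obtain ⟨hCc, hInv, hjunc2⟩ := List.isChain_append.1 hrest1
      refine List.isChain_append.2 ⟨hU, ?_, ?_⟩
      · refine List.isChain_append.2 ⟨chain'_lp hCc hcr n, hInv, ?_⟩
        intro x hx y hy
        refine hjunc2 x ?_ y hy
        rw [getLast?_lp hn hCnil] at hx
        exact hx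
      · intro x hx y hy
        refine hjunc x hx y ?_
        have e : (lp n C ++ invRev U).head? = (C ++ invRev U).head? := by
          rw [head?_append_left (lp_ne_nil hn hCnil), head?_lp hn hCnil,
            head?_append_left hCnil]
        rw [e] at hy
        exact hy

lemma core {U C V D : List (α × Bool)} {n : ℕ} (hn : 1 ≤ n)
    (hcrC : ∀ x ∈ C.getLast?, ∀ y ∈ C.head?, R x y)
    (hch : List.Chain' (R (α := α)) (U ++ lp n C ++ invRev U))
    (hUle : U.length ≤ V.length)
    (E : U ++ lp n C ++ invRev U = V ++ lp n D ++ invRev V) :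
    U ++ C ++ invRev U = V ++ D ++ invRev V := by
  by_cases hCnil : C = []
  · subst hCnil
    have hlpC : lp n ([] : List (α × Bool)) = [] :=
      List.length_eq_zero_iff.1 (by simp [lp_length])
    rw [hlpC] at hch E
    have hU : U = [] := eq_nil_of_chain'_self_invRev (by simpa using hch)
    subst hU
    simp only [List.nil_append, List.append_nil, invRev] at E ⊢
    -- E : [] = V ++ lp n D ++ invRev V
    have hlen := congrArg List.length E
    simp only [List.length_nil, List.length_append, lp_length, invRev,
      List.length_reverse, List.length_map] at hlen
    have hV : V.length = 0 := by omega
    have hD : D.length = 0 := by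
      rcases Nat.mul_eq_zero.1 (by omega : n * D.length = 0) with h | h
      · omega
      · exact h
    rw [List.length_eq_zero_iff.1 hV, List.length_eq_zero_iff.1 hD]
    simp
  · -- C nonempty
    have hUV : U <+: V := by
      have h1 : U <+: V ++ lp n D ++ invRev V := ⟨lp n C ++ invRev U, by rw [← E]; simp⟩
      have h2 : V <+: V ++ lp n D ++ invRev V := ⟨lp n D ++ invRev V, by simp⟩
      exact List.prefix_of_prefix_length_le h1 h2 hUle
    obtain ⟨S, rfl⟩ := hUV
    rw [invRev_append] at E
    rw [List.append_assoc, List.append_assoc, List.append_assoc] at E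
    have E2 := List.append_cancel_left E
    rw [← List.append_assoc, ← List.append_assoc] at E2
    have E3 : lp n C = S ++ lp n D ++ invRev S := List.append_cancel_right E2
    -- show S = []
    have hS : S = [] := by
      by_contra hSne
      have hCh : C.head? = S.head? := by
        rw [← head?_lp hn hCnil, E3]
        cases hs : S with
        | nil => exact absurd hs hSne
        | cons s ss => simp
      have hinvSne : invRev S ≠ [] := by
        intro hc
        apply hSne
        have := congrArg List.length hc
        simp only [FreeGroup.invRev_length, List.length_nil] at this
        exact List.length_eq_zero_iff.1 this
      have hCl : C.getLast? = (invRev S).getLast? := by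
        rw [← getLast?_lp hn hCnil, E3, List.append_assoc,
          List.getLast?_append_of_ne_nil _
            (fun hc => hinvSne (List.append_eq_nil_iff.1 hc).2),
          List.getLast?_append_of_ne_nil _ hinvSne]
      obtain ⟨s₀, ss, rfl⟩ := List.exists_cons_of_ne_nil hSne
      have hh : C.head? = some s₀ := by rw [hCh]; rfl
      have hl : C.getLast? = some (s₀.1, !s₀.2) := by
        rw [hCl, getLast?_invRev]; rfl
      exact hcrC _ hl _ hh ⟨rfl, by simp⟩
    subst hS
    simp only [List.append_nil, invRev, List.map_nil, List.reverse_nil, List.nil_append] at E3 ⊢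
    have E4 : lp n C = lp n D := by simpa using E3
    have hlen : C.length = D.length := by
      have := congrArg List.length E4
      rw [lp_length, lp_length] at this
      exact Nat.eq_of_mul_eq_mul_left (by omega) this
    have hCD : C = D := by
      obtain ⟨m, rfl⟩ : ∃ m, n = m + 1 := ⟨n - 1, by omega⟩
      have t1 : (lp (m+1) C).take C.length = C := by rw [lp]; exact List.take_left
      have t2 : (lp (m+1) D).take D.length = D := by rw [lp]; exact List.take_left
      rw [← t1, ← t2, E4, hlen]
    rw [hCD]

lemma unique_roots {a b : FreeGroup α} {n : ℕ} (hn : 1 ≤ n) (h : a ^ n = b ^ n) : a = b := by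
  obtain ⟨U, C, hA, hCc, hCcr⟩ := decomp a.toWord.length a.toWord le_rfl (chain'_toWord a)
  obtain ⟨V, D, hB, hDc, hDcr⟩ := decomp b.toWord.length b.toWord le_rfl (chain'_toWord b)
  have ha : a = FreeGroup.mk (U ++ C ++ invRev U) := by rw [← hA, FreeGroup.mk_toWord]
  have hb : b = FreeGroup.mk (V ++ D ++ invRev V) := by rw [← hB, FreeGroup.mk_toWord]
  have hAch : List.Chain' (R (α := α)) (U ++ C ++ invRev U) := by rw [← hA]; exact chain'_toWord a
  have hBch : List.Chain' (R (α := α)) (V ++ D ++ invRev V) := by rw [← hB]; exact chain'_toWord b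
  obtain ⟨hapow, hacs⟩ := pow_word hAch hCcr n hn
  obtain ⟨hbpow, hbcs⟩ := pow_word hBch hDcr n hn
  have E : U ++ lp n C ++ invRev U = V ++ lp n D ++ invRev V := by
    have e1 : FreeGroup.mk (U ++ lp n C ++ invRev U) = FreeGroup.mk (V ++ lp n D ++ invRev V) := by
      rw [← hapow, ← hbpow, ← ha, ← hb, h]
    have e2 := congrArg FreeGroup.toWord e1
    rwa [FreeGroup.toWord_mk, FreeGroup.toWord_mk, reduce_eq_self_of_chain' hacs,
      reduce_eq_self_of_chain' hbcs] at e2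
  rcases le_total U.length V.length with hle | hle
  · rw [ha, hb, core hn hCcr hacs hle E]
  · rw [ha, hb, core hn hDcr hbcs hle E.symm]

end LSaux

/-- In a free group, if nontrivial elements satisfy `x^m = y^n` with `m, n ≥ 1`,
then `x` and `y` commute. -/
theorem stmt_0 {α : Type*} (x y : FreeGroup α) (hx : x ≠ 1) (hy : y ≠ 1)
    (m n : ℕ) (hm : 1 ≤ m) (hn : 1 ≤ n) (h : x ^ m = y ^ n) :
    Commute x y := by
  letI := Classical.decEq α
  have c : Commute x (y ^ n) := by
    rw [← h]
    exact (Commute.refl x).pow_right m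
  have h1 : x * y ^ n * x⁻¹ = y ^ n := by rw [c.eq, mul_inv_cancel_right]
  have h2 : (x * y * x⁻¹) ^ n = y ^ n := by rw [conj_pow, h1]
  have h3 : x * y * x⁻¹ = y := LSaux.unique_roots hn h2
  show x * y = y * x
  exact mul_inv_eq_iff_eq_mul.mp h3
end

section
/- In a free group F, roots are unique: if x, y ∈ F and x^n = y^n for some integer n ≥ 1, then x = y. -/
namespace FreeGroupRoots

open FreeGroup List

variable {α : Type*}

/-- No-cancellation relation between adjacent letters. -/
def R (a b : α × Bool) : Prop := ¬(b.1 = a.1 ∧ b.2 = !a.2)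

/-- A word that is also reduced at the seam when read cyclically. -/
def CycRed (K : List (α × Bool)) : Prop :=
  ∀ p q, K.getLast? = some p → K.head? = some q → R p q

lemma chain'_reduce [DecidableEq α] (L : List (α × Bool)) :
    List.Chain' R (FreeGroup.reduce L) := by
  induction L with
  | nil => exact List.isChain_nil
  | cons x L ih =>
    rw [FreeGroup.reduce.cons]
    rcases h : FreeGroup.reduce L with _ | ⟨hd, tl⟩
    · exact List.isChain_singleton _
    · rw [h] at ih
      show List.Chain' R (if x.1 = hd.1 ∧ x.2 = !hd.2 then tl else x :: hd :: tl)
      by_cases hc : x.1 = hd.1 ∧ x.2 = !hd.2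
      · rw [if_pos hc]; exact ih.tail
      · rw [if_neg hc]
        refine List.IsChain.cons_cons ?_ ih
        intro ⟨h1, h2⟩
        exact hc ⟨h1.symm, by simp [h2]⟩

lemma reduce_eq_self [DecidableEq α] {L : List (α × Bool)} (h : List.Chain' R L) :
    FreeGroup.reduce L = L := by
  induction L with
  | nil => rfl
  | cons x L ih =>
    rw [FreeGroup.reduce.cons, ih h.tail]
    rcases hL : L with _ | ⟨hd, tl⟩
    · rfl
    · have hr : R x hd := (List.isChain_cons_cons.1 (hL ▸ h)).1
      have : ¬(x.1 = hd.1 ∧ x.2 = !hd.2) := by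
        intro ⟨h1, h2⟩
        exact hr ⟨h1.symm, by simp [h2]⟩
      simp [this]

lemma chain'_toWord [DecidableEq α] (x : FreeGroup α) : List.Chain' R x.toWord := by
  have := chain'_reduce (α := α) x.toWord
  rwa [FreeGroup.reduce_toWord] at this

lemma toWord_mk_of_chain' [DecidableEq α] {L : List (α × Bool)} (h : List.Chain' R L) :
    (FreeGroup.mk L).toWord = L := by
  rw [FreeGroup.toWord_mk, reduce_eq_self h]

lemma invRev_cons (x : α × Bool) (L : List (α × Bool)) :
    FreeGroup.invRev (x :: L) = FreeGroup.invRev L ++ [(x.1, !x.2)] := by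
  simp [FreeGroup.invRev]

/-- Cyclically reduced decomposition of a reduced word. -/
lemma decomp [DecidableEq α] (L : List (α × Bool)) (hL : List.Chain' R L) :
    ∃ C K, L = C ++ K ++ FreeGroup.invRev C ∧ CycRed K := by
  suffices h : ∀ N, ∀ L : List (α × Bool), L.length ≤ N → List.Chain' R L →
      ∃ C K, L = C ++ K ++ FreeGroup.invRev C ∧ CycRed K from
    h L.length L le_rfl hL
  clear hL L
  intro N
  induction N with
  | zero =>
    intro L hlen _
    obtain rfl : L = [] := List.length_eq_zero_iff.1 (by omega)
    exact ⟨[], [], by simp [FreeGroup.invRev], by intro p q hp _; simp at hp⟩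
  | succ N ih =>
  intro L hlen hL
  by_cases hcyc : CycRed L
  · exact ⟨[], L, by simp [FreeGroup.invRev], hcyc⟩
  · rw [CycRed] at hcyc
    push_neg at hcyc
    obtain ⟨p, q, hp, hq, hpq⟩ := hcyc
    rw [R, not_not] at hpq
    obtain ⟨h1, h2⟩ := hpq
    rcases L with _ | ⟨q', T⟩
    · simp at hq
    have hq' : q = q' := by
      have := hq; simp only [List.head?_cons, Option.some.injEq] at this
      exact this.symm
    rcases T.eq_nil_or_concat with rfl | ⟨T', p', rfl⟩
    · have hpq : q' = p := by simpa using hp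
      rw [hq', ← hpq] at h2
      simp at h2
    simp only [List.concat_eq_append] at hlen hL hp hq
    have hp' : p = p' := by
      have h5 := hp
      rw [show q' :: (T' ++ [p']) = (q' :: T') ++ [p'] by simp,
        List.getLast?_concat] at h5
      exact (Option.some.inj h5).symm
    rw [hq', hp'] at h1 h2
    have hT' : List.Chain' R T' := hL.tail.prefix ⟨[p'], rfl⟩
    obtain ⟨C', K, hdec, hK⟩ := ih T' (by simp at hlen ⊢; omega) hT'
    refine ⟨q' :: C', K, ?_, hK⟩
    have hqp : (q'.1, !q'.2) = p' := by
      apply Prod.ext <;> simp [h1, h2]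
    rw [invRev_cons, hqp, hdec]
    simp

lemma getLast?_invRev (C : List (α × Bool)) (x : α × Bool) (h : C.head? = some x) :
    (FreeGroup.invRev C).getLast? = some (x.1, !x.2) := by
  rcases C with _ | ⟨c, C⟩
  · simp at h
  · have : c = x := by simpa using h
    subst this
    rw [invRev_cons, List.getLast?_concat]

lemma head?_flatten_replicate {n : ℕ} (hn : 1 ≤ n) (K : List (α × Bool)) (hK : K ≠ []) :
    (List.flatten (List.replicate n K)).head? = K.head? := by
  obtain ⟨m, rfl⟩ := Nat.exists_eq_succ_of_ne_zero (by omega : n ≠ 0)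
  rw [List.replicate_succ, List.flatten_cons, List.head?_append_of_ne_nil _ hK]

lemma getLast?_flatten_replicate {n : ℕ} (hn : 1 ≤ n) (K : List (α × Bool)) (hK : K ≠ []) :
    (List.flatten (List.replicate n K)).getLast? = K.getLast? := by
  obtain ⟨m, rfl⟩ := Nat.exists_eq_succ_of_ne_zero (by omega : n ≠ 0)
  rw [List.replicate_succ', List.flatten_append]
  simp only [List.flatten_cons, List.flatten_nil, List.append_nil]
  rw [List.getLast?_append_of_ne_nil _ hK]

lemma flatten_replicate_ne_nil {n : ℕ} (hn : 1 ≤ n) (K : List (α × Bool)) (hK : K ≠ []) :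
    List.flatten (List.replicate n K) ≠ [] := by
  obtain ⟨m, rfl⟩ := Nat.exists_eq_succ_of_ne_zero (by omega : n ≠ 0)
  rw [List.replicate_succ, List.flatten_cons]
  simp [hK]

lemma chain'_flatten_replicate {n : ℕ} (K : List (α × Bool)) (hK : List.Chain' R K)
    (hcyc : CycRed K) : List.Chain' R (List.flatten (List.replicate n K)) := by
  induction n with
  | zero => exact List.isChain_nil
  | succ m ihm =>
    rw [List.replicate_succ, List.flatten_cons]
    rcases eq_or_ne K [] with rfl | hKne
    · rw [List.nil_append]; exact ihm
    rcases Nat.eq_zero_or_pos m with rfl | hm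
    · simpa using hK
    refine List.isChain_append.2 ⟨hK, ihm, ?_⟩
    intro x hx y hy
    rw [Option.mem_def, head?_flatten_replicate hm K hKne] at hy
    exact hcyc x y (Option.mem_def.1 hx) hy

/-- Uniqueness of the stripping decomposition. -/
lemma strip : ∀ (C D A B : List (α × Bool)), A ≠ [] → B ≠ [] → CycRed A → CycRed B →
    C ++ A ++ FreeGroup.invRev C = D ++ B ++ FreeGroup.invRev D → C = D ∧ A = B := by
  intro C
  induction C with
  | nil =>
    intro D A B hA hB hcA _ h
    rcases D with _ | ⟨d, D'⟩
    · simp only [FreeGroup.invRev_empty, List.append_nil, List.nil_append] at h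
      exact ⟨rfl, h⟩
    · exfalso
      simp only [FreeGroup.invRev_empty, List.append_nil, List.nil_append] at h
      rw [invRev_cons] at h
      have hhead : A.head? = some d := by rw [h]; simp
      have hlast : A.getLast? = some (d.1, !d.2) := by
        rw [h, show (d :: D') ++ B ++ (FreeGroup.invRev D' ++ [(d.1, !d.2)])
          = ((d :: D') ++ B ++ FreeGroup.invRev D') ++ [(d.1, !d.2)] by simp,
          List.getLast?_concat]
      exact hcA _ _ hlast hhead ⟨rfl, by simp⟩
  | cons c C' ihC =>
    intro D A B hA hB hcA hcB h
    rcases D with _ | ⟨d, D'⟩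
    · exfalso
      simp only [FreeGroup.invRev_empty, List.append_nil, List.nil_append] at h
      rw [invRev_cons] at h
      have hhead : B.head? = some c := by rw [← h]; simp
      have hlast : B.getLast? = some (c.1, !c.2) := by
        rw [← h, show (c :: C') ++ A ++ (FreeGroup.invRev C' ++ [(c.1, !c.2)])
          = ((c :: C') ++ A ++ FreeGroup.invRev C') ++ [(c.1, !c.2)] by simp,
          List.getLast?_concat]
      exact hcB _ _ hlast hhead ⟨rfl, by simp⟩
    · rw [invRev_cons, invRev_cons] at h
      have hcd : c = d := by
        have := congrArg List.head? h
        simpa using this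
      subst hcd
      have htail : (C' ++ A ++ FreeGroup.invRev C') ++ [(c.1, !c.2)]
          = (D' ++ B ++ FreeGroup.invRev D') ++ [(c.1, !c.2)] := by
        have := congrArg List.tail h
        simpa [List.append_assoc] using this
      have h2 : C' ++ A ++ FreeGroup.invRev C' = D' ++ B ++ FreeGroup.invRev D' :=
        List.append_cancel_right htail
      obtain ⟨h3, h4⟩ := ihC D' A B hA hB hcA hcB h2
      exact ⟨by rw [h3], h4⟩

/-- The reduced word of `c * kⁿ * c⁻¹` where the decomposition is reduced as written. -/
lemma toWord_conj_pow [DecidableEq α] {C K : List (α × Bool)} {n : ℕ} (hn : 1 ≤ n)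
    (hKne : K ≠ []) (hch : List.Chain' R (C ++ K ++ FreeGroup.invRev C)) (hKc : CycRed K) :
    (FreeGroup.mk (C ++ K ++ FreeGroup.invRev C)) ^ n
      = FreeGroup.mk (C ++ List.flatten (List.replicate n K) ++ FreeGroup.invRev C)
    ∧ List.Chain' R (C ++ List.flatten (List.replicate n K) ++ FreeGroup.invRev C) := by
  rw [List.append_assoc, List.Chain', List.isChain_append] at hch
  obtain ⟨hC, hrest, hjC⟩ := hch
  rw [List.isChain_append] at hrest
  obtain ⟨hK, hiC, hjK⟩ := hrest
  constructor
  · have : FreeGroup.mk (C ++ K ++ FreeGroup.invRev C)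
        = FreeGroup.mk C * FreeGroup.mk K * (FreeGroup.mk C)⁻¹ := by
      rw [FreeGroup.inv_mk, FreeGroup.mul_mk, FreeGroup.mul_mk]
    rw [this, conj_pow, FreeGroup.pow_mk, FreeGroup.inv_mk, FreeGroup.mul_mk,
      FreeGroup.mul_mk]
  · rw [List.append_assoc]
    refine List.isChain_append.2 ⟨hC, List.isChain_append.2
      ⟨chain'_flatten_replicate K hK hKc, hiC, ?_⟩, ?_⟩
    · intro p hp q hq
      rw [Option.mem_def, getLast?_flatten_replicate hn K hKne] at hp
      exact hjK p hp q hq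
    · intro p hp q hq
      rw [Option.mem_def, List.head?_append_of_ne_nil _ (flatten_replicate_ne_nil hn K hKne),
        head?_flatten_replicate hn K hKne] at hq
      refine hjC p hp q ?_
      rw [Option.mem_def, List.head?_append_of_ne_nil _ hKne]
      exact hq

end FreeGroupRoots

open FreeGroupRoots in
/-- Roots are unique in free groups: `x^n = y^n` with `n ≥ 1` implies `x = y`. -/
theorem stmt_2 {α : Type*} (x y : FreeGroup α) (n : ℕ) (hn : 1 ≤ n)
    (h : x ^ n = y ^ n) : x = y := by
  classical
  obtain ⟨C, K, hCK, hKc⟩ := decomp x.toWord (chain'_toWord x)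
  obtain ⟨D, M, hDM, hMc⟩ := decomp y.toWord (chain'_toWord y)
  have hx : x = FreeGroup.mk (C ++ K ++ FreeGroup.invRev C) := by
    rw [← hCK, FreeGroup.mk_toWord]
  have hy : y = FreeGroup.mk (D ++ M ++ FreeGroup.invRev D) := by
    rw [← hDM, FreeGroup.mk_toWord]
  have hchx : List.Chain' R (C ++ K ++ FreeGroup.invRev C) := hCK ▸ chain'_toWord x
  have hchy : List.Chain' R (D ++ M ++ FreeGroup.invRev D) := hDM ▸ chain'_toWord y
  -- degenerate cases
  rcases eq_or_ne K [] with rfl | hKne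
  · have hx1 : x = 1 := by
      rw [hx]
      have : C ++ [] ++ FreeGroup.invRev C = C ++ FreeGroup.invRev C := by simp
      rw [this, ← FreeGroup.mul_mk, ← FreeGroup.inv_mk, mul_inv_cancel]
    rcases eq_or_ne M [] with rfl | hMne
    · have hy1 : y = 1 := by
        rw [hy]
        have : D ++ [] ++ FreeGroup.invRev D = D ++ FreeGroup.invRev D := by simp
        rw [this, ← FreeGroup.mul_mk, ← FreeGroup.inv_mk, mul_inv_cancel]
      rw [hx1, hy1]
    · exfalso
      obtain ⟨hpow, hch⟩ := toWord_conj_pow hn hMne hchy hMc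
      have hynw : (y ^ n).toWord = D ++ List.flatten (List.replicate n M)
          ++ FreeGroup.invRev D := by
        rw [hy, hpow, toWord_mk_of_chain' hch]
      rw [← h, hx1, one_pow, FreeGroup.toWord_one] at hynw
      have hl := congrArg List.length hynw
      simp only [List.length_nil, List.length_append] at hl
      exact flatten_replicate_ne_nil hn M hMne
        (List.length_eq_zero_iff.1 (by omega))
  rcases eq_or_ne M [] with rfl | hMne
  · exfalso
    have hy1 : y = 1 := by
      rw [hy]
      have : D ++ [] ++ FreeGroup.invRev D = D ++ FreeGroup.invRev D := by simp
      rw [this, ← FreeGroup.mul_mk, ← FreeGroup.inv_mk, mul_inv_cancel]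
    obtain ⟨hpow, hch⟩ := toWord_conj_pow hn hKne hchx hKc
    have hxnw : (x ^ n).toWord = C ++ List.flatten (List.replicate n K)
        ++ FreeGroup.invRev C := by
      rw [hx, hpow, toWord_mk_of_chain' hch]
    rw [h, hy1, one_pow, FreeGroup.toWord_one] at hxnw
    have hl := congrArg List.length hxnw
    simp only [List.length_nil, List.length_append] at hl
    exact flatten_replicate_ne_nil hn K hKne
      (List.length_eq_zero_iff.1 (by omega))
  -- main case
  obtain ⟨hpowx, hchxn⟩ := toWord_conj_pow hn hKne hchx hKc
  obtain ⟨hpowy, hchyn⟩ := toWord_conj_pow hn hMne hchy hMc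
  have heq : C ++ List.flatten (List.replicate n K) ++ FreeGroup.invRev C
      = D ++ List.flatten (List.replicate n M) ++ FreeGroup.invRev D := by
    have h1 : (x ^ n).toWord = C ++ List.flatten (List.replicate n K)
        ++ FreeGroup.invRev C := by rw [hx, hpowx, toWord_mk_of_chain' hchxn]
    have h2 : (y ^ n).toWord = D ++ List.flatten (List.replicate n M)
        ++ FreeGroup.invRev D := by rw [hy, hpowy, toWord_mk_of_chain' hchyn]
    rw [← h1, ← h2, h]
  have hcKn : CycRed (List.flatten (List.replicate n K)) := by
    intro p q hp hq
    rw [getLast?_flatten_replicate hn K hKne] at hp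
    rw [head?_flatten_replicate hn K hKne] at hq
    exact hKc p q hp hq
  have hcMn : CycRed (List.flatten (List.replicate n M)) := by
    intro p q hp hq
    rw [getLast?_flatten_replicate hn M hMne] at hp
    rw [head?_flatten_replicate hn M hMne] at hq
    exact hMc p q hp hq
  obtain ⟨hCD, hKM⟩ := strip C D _ _ (flatten_replicate_ne_nil hn K hKne)
    (flatten_replicate_ne_nil hn M hMne) hcKn hcMn heq
  have hlen : K.length = M.length := by
    have := congrArg List.length hKM
    simp at this
    rcases this with h' | h'
    · exact h'
    · omega
  have hKeq : K = M := by
    obtain ⟨m, rfl⟩ := Nat.exists_eq_succ_of_ne_zero (by omega : n ≠ 0)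
    rw [List.replicate_succ, List.replicate_succ, List.flatten_cons,
      List.flatten_cons] at hKM
    have := congrArg (List.take K.length) hKM
    rwa [List.take_left, hlen, List.take_left] at this
  rw [hx, hy, hCD, hKeq]
end

section
/- Let F be the free group on two generators x, y, and let n₁, n₂ be positive integers. Then the elements z₁ = x^{n₂}, z₂ = y·x^{-n₁}·y⁻¹, a = x^{n₁ n₂}, b = y satisfy: z₁ ≠ 1, z₂ ≠ 1, z₁^{n₁} · z₂^{n₂} = a·b·a⁻¹·b⁻¹, and the subgroup generated by {z₁, z₂, a, b} is not cyclic. -/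
/-- The homomorphism sending `x` to translation by 1 and `y` to negation on `ℤ`. -/
noncomputable def φ : FreeGroup Bool →* Equiv.Perm ℤ :=
  FreeGroup.lift (fun t => if t then Equiv.addRight (1 : ℤ) else Equiv.neg ℤ)

lemma φ_x_pow (n : ℕ) : φ (FreeGroup.of true) ^ n = Equiv.addRight (n : ℤ) := by
  induction n with
  | zero => ext z; simp
  | succ k ih =>
    rw [pow_succ, ih]; ext z; simp [φ, Equiv.Perm.mul_apply]; omega

lemma φ_y : φ (FreeGroup.of false) = Equiv.neg ℤ := by simp [φ]

lemma x_pow_ne_one (n : ℕ) (h : 0 < n) : (FreeGroup.of true : FreeGroup Bool) ^ n ≠ 1 := by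
  intro he
  have h' := congrArg φ he
  rw [map_pow, map_one, φ_x_pow] at h'
  have := congrArg (fun e : Equiv.Perm ℤ => e 0) h'
  simp at this
  omega

/-- In the free group on two generators `x, y`, the elements
`z₁ = x^{n₂}`, `z₂ = y x^{-n₁} y⁻¹`, `a = x^{n₁ n₂}`, `b = y` are nontrivial
(for `z₁, z₂`), satisfy `z₁^{n₁} z₂^{n₂} = [a,b]`, and generate a
non-cyclic subgroup. -/
theorem stmt_5 (n₁ n₂ : ℕ) (h₁ : 0 < n₁) (h₂ : 0 < n₂) :
    let x : FreeGroup Bool := FreeGroup.of true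
    let y : FreeGroup Bool := FreeGroup.of false
    let z₁ := x ^ n₂
    let z₂ := y * x ^ (-(n₁ : ℤ)) * y⁻¹
    let a := x ^ (n₁ * n₂)
    let b := y
    z₁ ≠ 1 ∧ z₂ ≠ 1 ∧ z₁ ^ n₁ * z₂ ^ n₂ = a * b * a⁻¹ * b⁻¹ ∧
      ¬ IsCyclic (Subgroup.closure ({z₁, z₂, a, b} : Set (FreeGroup Bool))) := by
  intro x y z₁ z₂ a b
  have hxz : x ^ (-(n₁ : ℤ)) = (x ^ n₁)⁻¹ := by
    rw [zpow_neg, zpow_natCast]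
  refine ⟨x_pow_ne_one n₂ h₂, ?_, ?_, ?_⟩
  · -- z₂ ≠ 1
    intro h
    apply x_pow_ne_one n₁ h₁
    have hz : x ^ (-(n₁ : ℤ)) = 1 := by
      have h3 := congrArg (fun g => y⁻¹ * g * y) h
      simp only [z₂, mul_one, mul_assoc, inv_mul_cancel, inv_mul_cancel_left] at h3
      simpa [mul_assoc] using h3
    rw [hxz, inv_eq_one] at hz
    exact hz
  · -- the equation
    show (x ^ n₂) ^ n₁ * (y * x ^ (-(n₁ : ℤ)) * y⁻¹) ^ n₂
        = x ^ (n₁ * n₂) * y * (x ^ (n₁ * n₂))⁻¹ * y⁻¹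
    rw [hxz, conj_pow, inv_pow, ← pow_mul, ← pow_mul, Nat.mul_comm n₂ n₁]
    group
  · -- not cyclic
    intro hC
    letI : CommGroup (Subgroup.closure ({z₁, z₂, a, b} : Set (FreeGroup Bool))) :=
      IsCyclic.commGroup
    have hz₁ : z₁ ∈ Subgroup.closure ({z₁, z₂, a, b} : Set (FreeGroup Bool)) :=
      Subgroup.subset_closure (by simp)
    have hb : b ∈ Subgroup.closure ({z₁, z₂, a, b} : Set (FreeGroup Bool)) :=
      Subgroup.subset_closure (by simp)
    have hcomm : z₁ * b = b * z₁ :=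
      congrArg Subtype.val (mul_comm (⟨z₁, hz₁⟩ : Subgroup.closure _) ⟨b, hb⟩)
    have h' := congrArg φ hcomm
    simp only [z₁, b, x, y, map_mul, map_pow, φ_x_pow, φ_y] at h'
    have := congrArg (fun e : Equiv.Perm ℤ => e 0) h'
    simp [Equiv.Perm.mul_apply] at this
    omega
end
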